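/- For odd n ≥ 7, the edge set S = {v_0v_1, v_1v_2, v_3v_4, v_5v_6, …, v_{n−2}v_{n−1}} of size ⌈n/2⌉ has the property that C_n^2 − S is triangle-free. -/

import Mathlib

open SimpleGraph

variable {V : Type*}

/-- An orientation of a simple graph: each edge gets exactly one direction. -/
structure GraphOrientation {V : Type*} (G : SimpleGraph V) where
  rel : V → V → Prop
  sub : ∀ ⦃u v⦄, rel u v → G.Adj u v
  cover : ∀ ⦃u v⦄, G.Adj u v → rel u v ∨ rel v u
  asymm : ∀ ⦃u v⦄, rel u v → ¬ rel v u

/-- An orientation is acyclic if it has no directed cycle. -/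
def GraphOrientation.Acyclic {G : SimpleGraph V} (D : GraphOrientation G) : Prop :=
  ∀ v, ¬ Relation.TransGen D.rel v v

/-- An arc `u → v` of an acyclic orientation is dependent iff its reversal creates a
directed cycle, equivalently there is another directed path from `u` to `v`. -/
def GraphOrientation.Dep {G : SimpleGraph V} (D : GraphOrientation G) (u v : V) : Prop :=
  D.rel u v ∧ Relation.TransGen (fun a b => D.rel a b ∧ ¬(a = u ∧ b = v)) u v

/-- The set of dependent arcs of an orientation. -/
def GraphOrientation.depArcs {G : SimpleGraph V} (D : GraphOrientation G) : Set (V × V) :=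
  {p | D.Dep p.1 p.2}

/-- The number of dependent arcs. -/
noncomputable def depCount {G : SimpleGraph V} (D : GraphOrientation G) : ℕ :=
  D.depArcs.ncard

/-- Minimum number of dependent arcs over all acyclic orientations. -/
noncomputable def dmin (G : SimpleGraph V) : ℕ :=
  sInf {k | ∃ D : GraphOrientation G, D.Acyclic ∧ depCount D = k}

/-- Maximum number of dependent arcs over all acyclic orientations. -/
noncomputable def dmax (G : SimpleGraph V) : ℕ :=
  sSup {k | ∃ D : GraphOrientation G, D.Acyclic ∧ depCount D = k}

/-- Minimum number of edges whose deletion makes `G` triangle-free. -/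
noncomputable def piT (G : SimpleGraph V) : ℕ :=
  sInf {k | ∃ S : Set (Sym2 V), S ⊆ G.edgeSet ∧ S.ncard = k ∧ (G.deleteEdges S).CliqueFree 3}

/-- The square of the cycle `C_n` on vertices `ZMod n`. -/
def cycleSq (n : ℕ) : SimpleGraph (ZMod n) where
  Adj u v := u ≠ v ∧ (u - v = 1 ∨ v - u = 1 ∨ u - v = 2 ∨ v - u = 2)
  symm := ⟨fun u v h => ⟨h.1.symm, by tauto⟩⟩
  loopless := ⟨fun u h => h.1 rfl⟩

open SimpleGraph

/-- The deleted edge set. -/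
def delSet (n : ℕ) : Set (Sym2 (ZMod n)) :=
  insert s((0 : ZMod n), (1 : ZMod n))
    {e : Sym2 (ZMod n) | ∃ k : ℕ, k < (n - 1) / 2 ∧
      e = s(((2 * k + 1 : ℕ) : ZMod n), ((2 * k + 2 : ℕ) : ZMod n))}

private lemma zmod_nat_inj {n : ℕ} {a b : ℕ} (ha : a < n) (hb : b < n)
    (h : (a : ZMod n) = b) : a = b := by
  haveI : NeZero n := ⟨by omega⟩
  have h' := congrArg ZMod.val h
  rwa [ZMod.val_cast_of_lt ha, ZMod.val_cast_of_lt hb] at h'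

private lemma zmod_nat_ne_zero {n : ℕ} {k : ℕ} (h1 : 0 < k) (h2 : k < n) :
    ((k : ℕ) : ZMod n) ≠ 0 := by
  intro h
  rw [ZMod.natCast_eq_zero_iff] at h
  exact absurd (Nat.le_of_dvd h1 h) (by omega)

private lemma key_mem (n : ℕ) (hn : 7 ≤ n) (ho : Odd n) (x : ZMod n) :
    s(x, x + 1) ∈ delSet n ∨ s(x + 1, x + 2) ∈ delSet n := by
  haveI : NeZero n := ⟨by omega⟩
  obtain ⟨t, ht⟩ := ho
  have hx : ((x.val : ℕ) : ZMod n) = x := ZMod.natCast_zmod_val x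
  have hr : x.val < n := x.val_lt
  rcases Nat.even_or_odd x.val with he | hodd
  · -- even val
    rcases eq_or_ne x.val 0 with h0 | h0
    · -- x = 0 : edge s(x,x+1) = s(0,1)
      left
      have hx0 : x = 0 := by rw [← hx, h0]; simp
      exact Set.mem_insert_iff.mpr (Or.inl (by rw [hx0]; norm_num))
    · rcases eq_or_ne x.val (n - 1) with hn1 | hn1
      · -- x = n-1 : s(x+1,x+2) = s(0,1)
        right
        have h1 : x + 1 = 0 := by
          rw [← hx, hn1, ← Nat.cast_add_one, show n - 1 + 1 = n by omega,
            ZMod.natCast_self]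
        have h2 : x + 2 = 1 := by rw [show x + 2 = x + 1 + 1 by ring, h1]; ring
        exact Set.mem_insert_iff.mpr (Or.inl (by rw [h1, h2]))
      · -- 2 ≤ x.val ≤ n - 3, even
        right
        refine Set.mem_insert_iff.mpr (Or.inr ⟨x.val / 2, ?_, ?_⟩)
        · obtain ⟨s, hs⟩ := he; omega
        · have e1 : 2 * (x.val / 2) + 1 = x.val + 1 := by
            obtain ⟨s, hs⟩ := he; omega
          have e2 : 2 * (x.val / 2) + 2 = x.val + 2 := by
            obtain ⟨s, hs⟩ := he; omega
          rw [e1, e2]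
          push_cast
          rw [hx]
  · -- odd val : s(x, x+1) deleted
    left
    refine Set.mem_insert_iff.mpr (Or.inr ⟨(x.val - 1) / 2, ?_, ?_⟩)
    · obtain ⟨s, hs⟩ := hodd; omega
    · have e1 : 2 * ((x.val - 1) / 2) + 1 = x.val := by
        obtain ⟨s, hs⟩ := hodd; omega
      have e2 : 2 * ((x.val - 1) / 2) + 2 = x.val + 1 := by
        obtain ⟨s, hs⟩ := hodd; omega
      rw [e1, e2]
      push_cast
      rw [hx]

private lemma key' (n : ℕ) (hn : 7 ≤ n) (ho : Odd n) (x y z : ZMod n)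
    (hy : y = x + 1) (hz : z = x + 2)
    (h1 : s(x, y) ∉ delSet n) (h2 : s(y, z) ∉ delSet n) : False := by
  subst hy hz
  rcases key_mem n hn ho x with h | h
  · exact h1 h
  · exact h2 h

private lemma delSet_ncard (n : ℕ) (hn : 7 ≤ n) (ho : Odd n) :
    (delSet n).ncard = (n + 1) / 2 := by
  haveI : NeZero n := ⟨by omega⟩
  obtain ⟨t, ht⟩ := ho
  set m := (n - 1) / 2 with hm
  set f : ℕ → Sym2 (ZMod n) :=
    fun k => s(((2 * k + 1 : ℕ) : ZMod n), ((2 * k + 2 : ℕ) : ZMod n)) with hf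
  have hT : {e : Sym2 (ZMod n) | ∃ k : ℕ, k < m ∧ e = f k} = f '' Set.Iio m := by
    ext e
    simp only [Set.mem_setOf_eq, Set.mem_image, Set.mem_Iio]
    constructor
    · rintro ⟨k, hk, rfl⟩; exact ⟨k, hk, rfl⟩
    · rintro ⟨k, hk, rfl⟩; exact ⟨k, hk, rfl⟩
  have hinj : Set.InjOn f (Set.Iio m) := by
    intro j hj k hk hjk
    simp only [Set.mem_Iio] at hj hk
    rw [hf, Sym2.eq_iff] at hjk
    rcases hjk with ⟨h1, -⟩ | ⟨h1, h2⟩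
    · have := zmod_nat_inj (by omega) (by omega) h1; omega
    · have := zmod_nat_inj (by omega) (by omega) h1
      have := zmod_nat_inj (by omega) (by omega) h2
      omega
  have hnm : s((0 : ZMod n), (1 : ZMod n)) ∉ f '' Set.Iio m := by
    rintro ⟨k, hk, hke⟩
    simp only [Set.mem_Iio] at hk
    rw [hf, Sym2.eq_iff] at hke
    rcases hke with ⟨h1, -⟩ | ⟨-, h2⟩
    · exact zmod_nat_ne_zero (n := n) (show 0 < 2 * k + 1 by omega) (by omega) h1
    · exact zmod_nat_ne_zero (n := n) (show 0 < 2 * k + 2 by omega) (by omega) h2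
  rw [delSet, hT, Set.ncard_insert_of_notMem hnm ((Set.finite_Iio m).image f),
    Set.ncard_image_of_injOn hinj]
  have : (Set.Iio m) = ↑(Finset.range m) := by ext a; simp
  rw [this, Set.ncard_coe_finset, Finset.card_range]
  omega

private lemma cycleSq_adj' {n : ℕ} {u v : ZMod n} :
    (cycleSq n).Adj u v ↔ u ≠ v ∧ (u - v = 1 ∨ v - u = 1 ∨ u - v = 2 ∨ v - u = 2) :=
  Iff.rfl

private lemma tri_free (n : ℕ) (hn : 7 ≤ n) (ho : Odd n) :
    ((cycleSq n).deleteEdges (delSet n)).CliqueFree 3 := by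
  intro T hT
  rw [is3Clique_iff] at hT
  obtain ⟨a, b, c, hab, hac, hbc, -⟩ := hT
  rw [deleteEdges_adj, cycleSq_adj'] at hab hac hbc
  obtain ⟨⟨hne_ab, hd_ab⟩, hS_ab⟩ := hab
  obtain ⟨⟨hne_ac, hd_ac⟩, hS_ac⟩ := hac
  obtain ⟨⟨hne_bc, hd_bc⟩, hS_bc⟩ := hbc
  have bad : ∀ k : ℕ, 0 < k → k < n → ((k : ℕ) : ZMod n) = 0 → False := fun k h1 h2 h =>
    zmod_nat_ne_zero h1 h2 h
  rcases hd_ab with h1 | h1 | h1 | h1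
  · -- b = a - 1
    have hb : b = a - 1 := by linear_combination -h1
    subst hb
    rcases hd_bc with h2 | h2 | h2 | h2
    · -- c = a - 2 :: triple (c, b, a)
      have hc : c = a - 2 := by linear_combination h1 - h2 - h1
      subst hc
      exact key' n hn ho (a - 2) (a - 1) a (by ring) (by ring)
        (by rw [Sym2.eq_swap]; exact hS_bc) (by rw [Sym2.eq_swap]; exact hS_ab)
    · -- c = a
      exact hne_ac (by linear_combination -h1 - h2)
    · -- c = a - 3 : bad
      have hc : c = a - 3 := by linear_combination -h1 - h2
      subst hc
      rcases hd_ac with h3 | h3 | h3 | h3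
      · exact bad 2 (by norm_num) (by omega) (by push_cast; linear_combination h3)
      · exact bad 4 (by norm_num) (by omega) (by push_cast; linear_combination -h3)
      · exact bad 1 (by norm_num) (by omega) (by push_cast; linear_combination h3)
      · exact bad 5 (by norm_num) (by omega) (by push_cast; linear_combination -h3)
    · -- c = a + 1 :: triple (b, a, c)
      have hc : c = a + 1 := by linear_combination h2 - h1
      subst hc
      exact key' n hn ho (a - 1) a (a + 1) (by ring) (by ring)
        (by rw [Sym2.eq_swap]; exact hS_ab) hS_ac
  · -- b = a + 1
    have hb : b = a + 1 := by linear_combination h1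
    subst hb
    rcases hd_bc with h2 | h2 | h2 | h2
    · -- c = a :: contradiction
      exact hne_ac (by linear_combination h2)
    · -- c = a + 2 :: triple (a, b, c)
      have hc : c = a + 2 := by linear_combination h1 + h2
      subst hc
      exact key' n hn ho a (a + 1) (a + 2) rfl rfl hS_ab hS_bc
    · -- c = a - 1 :: triple (c, a, b)
      have hc : c = a - 1 := by linear_combination -h2 + h1 - h1
      subst hc
      exact key' n hn ho (a - 1) a (a + 1) (by ring) (by ring)
        (by rw [Sym2.eq_swap]; exact hS_ac) hS_ab
    · -- c = a + 3 : bad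
      have hc : c = a + 3 := by linear_combination h1 + h2
      subst hc
      rcases hd_ac with h3 | h3 | h3 | h3
      · exact bad 4 (by norm_num) (by omega) (by push_cast; linear_combination -h3)
      · exact bad 2 (by norm_num) (by omega) (by push_cast; linear_combination h3)
      · exact bad 5 (by norm_num) (by omega) (by push_cast; linear_combination -h3)
      · exact bad 1 (by norm_num) (by omega) (by push_cast; linear_combination h3)
  · -- b = a - 2
    have hb : b = a - 2 := by linear_combination -h1
    subst hb
    rcases hd_bc with h2 | h2 | h2 | h2
    · -- c = a - 3 : bad
      have hc : c = a - 3 := by linear_combination -h1 - h2 + h1 - h1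
      subst hc
      rcases hd_ac with h3 | h3 | h3 | h3
      · exact bad 2 (by norm_num) (by omega) (by push_cast; linear_combination h3)
      · exact bad 4 (by norm_num) (by omega) (by push_cast; linear_combination -h3)
      · exact bad 1 (by norm_num) (by omega) (by push_cast; linear_combination h3)
      · exact bad 5 (by norm_num) (by omega) (by push_cast; linear_combination -h3)
    · -- c = a - 1 :: triple (b, c, a)
      have hc : c = a - 1 := by linear_combination h2 - h1
      subst hc
      exact key' n hn ho (a - 2) (a - 1) a (by ring) (by ring)
        hS_bc (by rw [Sym2.eq_swap]; exact hS_ac)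
    · -- c = a - 4 : bad
      have hc : c = a - 4 := by linear_combination -h1 - h2
      subst hc
      rcases hd_ac with h3 | h3 | h3 | h3
      · exact bad 3 (by norm_num) (by omega) (by push_cast; linear_combination h3)
      · exact bad 5 (by norm_num) (by omega) (by push_cast; linear_combination -h3)
      · exact bad 2 (by norm_num) (by omega) (by push_cast; linear_combination h3)
      · exact bad 6 (by norm_num) (by omega) (by push_cast; linear_combination -h3)
    · -- c = a :: contradiction
      exact hne_ac (by linear_combination -h2)
  · -- b = a + 2
    have hb : b = a + 2 := by linear_combination h1
    subst hb
    rcases hd_bc with h2 | h2 | h2 | h2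
    · -- c = a + 1 :: triple (a, c, b)
      have hc : c = a + 1 := by linear_combination h1 - h2
      subst hc
      exact key' n hn ho a (a + 1) (a + 2) rfl rfl
        hS_ac (by rw [Sym2.eq_swap]; exact hS_bc)
    · -- c = a + 3 : bad
      have hc : c = a + 3 := by linear_combination h1 + h2
      subst hc
      rcases hd_ac with h3 | h3 | h3 | h3
      · exact bad 4 (by norm_num) (by omega) (by push_cast; linear_combination -h3)
      · exact bad 2 (by norm_num) (by omega) (by push_cast; linear_combination h3)
      · exact bad 5 (by norm_num) (by omega) (by push_cast; linear_combination -h3)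
      · exact bad 1 (by norm_num) (by omega) (by push_cast; linear_combination h3)
    · -- c = a :: contradiction
      exact hne_ac (by linear_combination h2)
    · -- c = a + 4 : bad
      have hc : c = a + 4 := by linear_combination h1 + h2
      subst hc
      rcases hd_ac with h3 | h3 | h3 | h3
      · exact bad 5 (by norm_num) (by omega) (by push_cast; linear_combination -h3)
      · exact bad 3 (by norm_num) (by omega) (by push_cast; linear_combination h3)
      · exact bad 6 (by norm_num) (by omega) (by push_cast; linear_combination -h3)
      · exact bad 2 (by norm_num) (by omega) (by push_cast; linear_combination h3)

/-- For odd `n ≥ 7`, deleting the `⌈n/2⌉` edges `v_0v_1, v_1v_2, v_3v_4, …, v_{n-2}v_{n-1}`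
from `C_n^2` leaves a triangle-free graph. -/
theorem stmt6 (n : ℕ) (hn : 7 ≤ n) (ho : Odd n) :
    ((insert s((0 : ZMod n), (1 : ZMod n))
        {e : Sym2 (ZMod n) | ∃ k : ℕ, k < (n - 1) / 2 ∧
          e = s(((2 * k + 1 : ℕ) : ZMod n), ((2 * k + 2 : ℕ) : ZMod n))}).ncard = (n + 1) / 2) ∧
    ((cycleSq n).deleteEdges
      (insert s((0 : ZMod n), (1 : ZMod n))
        {e : Sym2 (ZMod n) | ∃ k : ℕ, k < (n - 1) / 2 ∧
          e = s(((2 * k + 1 : ℕ) : ZMod n), ((2 * k + 2 : ℕ) : ZMod n))})).CliqueFree 3 := by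
  exact ⟨delSet_ncard n hn ho, tri_free n hn ho⟩
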